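/- With g as defined and F₂ > F̄ (persistence equilibrium), any differentiable solution F(t) ≥ 0 of F' = g(F, M_s(t)) - δ_F F with M_s(t) ≥ 0 satisfies: if F(0) ≤ F₂ then F(t) ≤ F₂ for all t ≥ 0 (i.e., [0, F₂] is positively invariant for F), and if F(0) > F₂ then F(t) ≤ F(0)e^{-σt} as long as F(t) ≥ F₂, with σ := δ_F - νβ_Eν_E/α(F₂) > 0. -/

import Mathlib

noncomputable def gfun (bE nE dE dM gs k nu : ℝ) (F Ms : ℝ) : ℝ :=
  if 0 < F then
    nu * (1 - nu) * bE ^ 2 * nE ^ 2 * F ^ 2 /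
      ((bE * F / k + nE + dE) *
        ((1 - nu) * nE * bE * F + (bE * F / k + nE + dE) * dM * gs * Ms))
  else 0

theorem stmt_18 (bE nE dE dM dF gs k nu F2 : ℝ)
    (hbE : 0 < bE) (hnE : 0 < nE) (hdE : 0 < dE) (hdM : 0 < dM)
    (hdF : 0 < dF) (hgs : 0 < gs) (hk : 0 < k) (hnu : nu ∈ Set.Ioo (0:ℝ) 1)
    (hR0 : 1 < nu * bE * nE / (dF * (nE + dE)))
    (hF2 : nu * nE * k / dF * (1 - 1 / (nu * bE * nE / (dF * (nE + dE)))) < F2)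
    (F Ms : ℝ → ℝ)
    (hFdiff : Differentiable ℝ F)
    (hFpos : ∀ t : ℝ, 0 ≤ t → 0 ≤ F t)
    (hMspos : ∀ t : ℝ, 0 ≤ t → 0 ≤ Ms t)
    (hode : ∀ t : ℝ, 0 ≤ t →
      deriv F t = gfun bE nE dE dM gs k nu (F t) (Ms t) - dF * F t) :
    0 < dF - nu * bE * nE / (bE * F2 / k + nE + dE) ∧
    (F 0 ≤ F2 → ∀ t : ℝ, 0 ≤ t → F t ≤ F2) ∧
    (F2 < F 0 → ∀ t : ℝ, 0 ≤ t → (∀ s ∈ Set.Icc (0:ℝ) t, F2 ≤ F s) →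
      F t ≤ F 0 * Real.exp (-(dF - nu * bE * nE / (bE * F2 / k + nE + dE)) * t)) := by
  obtain ⟨hnu0, hnu1⟩ := hnu
  have hnu1' : 0 < 1 - nu := by linarith
  have hR0pos : (0:ℝ) < nu * bE * nE / (dF * (nE + dE)) := lt_trans one_pos hR0
  -- F2 > 0
  have hF2pos : 0 < F2 := by
    have h1 : 1 / (nu * bE * nE / (dF * (nE + dE))) < 1 := by
      rw [div_lt_one hR0pos]; linarith
    have h2 : 0 < nu * nE * k / dF := by positivity
    nlinarith
  -- rewrite 1/R0
  have e1 : 1 / (nu * bE * nE / (dF * (nE + dE))) = dF * (nE + dE) / (nu * bE * nE) :=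
    one_div_div _ _
  rw [e1] at hF2
  have hFbar : nu * nE * k / dF * (1 - dF * (nE + dE) / (nu * bE * nE))
      = nu * nE * k / dF - k * (nE + dE) / bE := by
    field_simp
  rw [hFbar] at hF2
  -- positivity of alpha(F2)
  have hα2pos : 0 < bE * F2 / k + nE + dE := by positivity
  -- sigma positive
  have hkey : nu * bE * nE < dF * (bE * F2 / k + nE + dE) := by
    have h3 : dF * bE / k * (nu * nE * k / dF - k * (nE + dE) / bE)
        = nu * nE * bE - dF * (nE + dE) := by field_simp
    have h4 := mul_lt_mul_of_pos_left hF2 (show (0:ℝ) < dF * bE / k by positivity)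
    rw [h3] at h4
    have h5 : dF * (bE * F2 / k + nE + dE) = dF * bE / k * F2 + dF * (nE + dE) := by ring
    linarith
  have hσ : 0 < dF - nu * bE * nE / (bE * F2 / k + nE + dE) := by
    rw [sub_pos, div_lt_iff₀ hα2pos]
    linarith
  set σ : ℝ := dF - nu * bE * nE / (bE * F2 / k + nE + dE) with hσdef
  -- key derivative bound
  have key : ∀ s : ℝ, 0 ≤ s → F2 ≤ F s → deriv F s ≤ -σ * F s := by
    intro s hs hFs
    have hFspos : 0 < F s := lt_of_lt_of_le hF2pos hFs
    have hαpos : 0 < bE * F s / k + nE + dE := by positivity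
    have hg : gfun bE nE dE dM gs k nu (F s) (Ms s)
        ≤ nu * bE * nE / (bE * F2 / k + nE + dE) * F s := by
      unfold gfun
      rw [if_pos hFspos]
      have hMs := hMspos s hs
      have hbase : 0 < (1 - nu) * nE * bE * F s := by positivity
      calc nu * (1 - nu) * bE ^ 2 * nE ^ 2 * F s ^ 2 /
            ((bE * F s / k + nE + dE) *
              ((1 - nu) * nE * bE * F s + (bE * F s / k + nE + dE) * dM * gs * Ms s))
          ≤ nu * (1 - nu) * bE ^ 2 * nE ^ 2 * F s ^ 2 /
            ((bE * F s / k + nE + dE) * ((1 - nu) * nE * bE * F s)) := by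
            apply div_le_div_of_nonneg_left (by positivity) (by positivity)
            nlinarith [mul_nonneg (mul_nonneg (mul_nonneg (mul_nonneg hαpos.le hαpos.le) hdM.le) hgs.le) hMs]
        _ = nu * bE * nE / (bE * F s / k + nE + dE) * F s := by
            rw [div_mul_eq_mul_div, div_eq_div_iff (by positivity) (by positivity)]
            ring
        _ ≤ nu * bE * nE / (bE * F2 / k + nE + dE) * F s := by
            apply mul_le_mul_of_nonneg_right _ hFspos.le
            apply div_le_div_of_nonneg_left (by positivity) hα2pos
            gcongr
    rw [hode s hs, hσdef]
    nlinarith [hg]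
  refine ⟨hσ, ?_, ?_⟩
  · -- invariance of [0, F2]
    intro hF0 t ht
    by_contra hcon
    push_neg at hcon
    set S : Set ℝ := Set.Icc 0 t ∩ {s | F s ≤ F2} with hSdef
    have hSne : S.Nonempty := ⟨0, ⟨le_refl 0, ht⟩, hF0⟩
    have hSbdd : BddAbove S := ⟨t, fun x hx => hx.1.2⟩
    have hScl : IsClosed S :=
      isClosed_Icc.inter (isClosed_le hFdiff.continuous continuous_const)
    have ht0mem : sSup S ∈ S := hScl.csSup_mem hSne hSbdd
    set t0 := sSup S with ht0def
    have ht00 : 0 ≤ t0 := ht0mem.1.1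
    have ht0t : t0 ≤ t := ht0mem.1.2
    have hFt0 : F t0 ≤ F2 := ht0mem.2
    have ht0lt : t0 < t := lt_of_le_of_ne ht0t (fun he => by rw [he] at hFt0; linarith)
    have hmid : ∀ s : ℝ, t0 < s → s ≤ t → F2 < F s := by
      intro s hs1 hs2
      by_contra hFsle
      push_neg at hFsle
      have : s ∈ S := ⟨⟨le_trans ht00 hs1.le, hs2⟩, hFsle⟩
      have := le_csSup hSbdd this
      linarith
    have hanti : AntitoneOn F (Set.Icc t0 t) := by
      apply antitoneOn_of_deriv_nonpos (convex_Icc t0 t)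
        hFdiff.continuous.continuousOn
        (fun s _ => (hFdiff s).differentiableWithinAt)
      intro s hs
      rw [interior_Icc] at hs
      have hFsgt : F2 < F s := hmid s hs.1 hs.2.le
      have hs0 : 0 ≤ s := le_trans ht00 hs.1.le
      have hk2 := key s hs0 hFsgt.le
      have h0 : 0 ≤ σ * F s := mul_nonneg hσ.le (by linarith [lt_trans hF2pos hFsgt])
      linarith
    have := hanti (Set.left_mem_Icc.mpr ht0lt.le) (Set.right_mem_Icc.mpr ht0lt.le) ht0lt.le
    linarith
  · -- exponential decay
    intro _ t ht hIcc
    have hσt : -σ * t = -(σ * t) := by ring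
    rw [hσt, Real.exp_neg, ← div_eq_mul_inv, le_div_iff₀ (Real.exp_pos _)]
    set h : ℝ → ℝ := fun s => F s * Real.exp (σ * s) with hhdef
    have hder : ∀ s : ℝ, HasDerivAt h
        (deriv F s * Real.exp (σ * s) + F s * (Real.exp (σ * s) * σ)) s := by
      intro s
      have h1 : HasDerivAt (fun u : ℝ => Real.exp (σ * u)) (Real.exp (σ * s) * σ) s := by
        have := (Real.hasDerivAt_exp (σ * s)).comp s ((hasDerivAt_id s).const_mul σ)
        simpa [Function.comp_def] using this
      exact ((hFdiff s).hasDerivAt.mul h1)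
    have hanti : AntitoneOn h (Set.Icc 0 t) := by
      apply antitoneOn_of_deriv_nonpos (convex_Icc 0 t)
        (Continuous.continuousOn (by
          exact hFdiff.continuous.mul (Real.continuous_exp.comp (continuous_const.mul continuous_id))))
        (fun s _ => (hder s).differentiableAt.differentiableWithinAt)
      intro s hs
      rw [interior_Icc] at hs
      have hFs : F2 ≤ F s := hIcc s ⟨hs.1.le, hs.2.le⟩
      have hk2 := key s hs.1.le hFs
      rw [(hder s).deriv]
      have hE := Real.exp_pos (σ * s)
      have h1 : deriv F s * Real.exp (σ * s) ≤ -σ * F s * Real.exp (σ * s) :=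
        mul_le_mul_of_nonneg_right hk2 hE.le
      have h2 : -σ * F s * Real.exp (σ * s) + F s * (Real.exp (σ * s) * σ) = 0 := by ring
      linarith
    have := hanti (Set.left_mem_Icc.mpr ht) (Set.right_mem_Icc.mpr ht) ht
    simpa [hhdef] using this
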